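/- Let p ≥ 1 and l ≥ 1 be integers, let D be a finite set with |D| = l, let q be an integer with 1 ≤ q ≤ l, and let λ > 0. For each j ∈ {1,…,p} let T_j be a nonempty set, let s_j : T_j → ℝ satisfy s_j(t) > 0 for all t, and for each d ∈ D let r_{d,j} : T_j → ℝ be such that t ↦ |r_{d,j}(t)|/s_j(t) is bounded above on T_j. Let k^s be the q-th smallest value of the family (sup_{1≤j≤p} sup_{t∈T_j} |r_{d,j}(t)|/s_j(t))_{d∈D} and k^{λs} the q-th smallest value of (sup_{1≤j≤p} sup_{t∈T_j} |r_{d,j}(t)|/(λ·s_j(t)))_{d∈D}. Then k^{λs} = k^s/λ, and for any functions y_j, μ_j : T_j → ℝ the following are equivalent: (i) |y_j(t) − μ_j(t)| ≤ k^{λs} · λ·s_j(t) for all j and all t ∈ T_j; (ii) |y_j(t) − μ_j(t)| ≤ k^s · s_j(t) for all j and all t ∈ T_j. -/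

import Mathlib

open Pointwise


/-- The `q`-th smallest value (counted with multiplicity, `q` starting from 1) of a finite
family of real numbers: the `q`-th entry of the list of values sorted in nondecreasing order. -/
noncomputable def qthSmallest {D : Type*} [Fintype D] (x : D → ℝ) (q : ℕ) : ℝ :=
  (Multiset.sort (Finset.univ.val.map x) (· ≤ ·)).getD (q - 1) 0

private lemma sort_map_mono {f : ℝ → ℝ} (hf : Monotone f) (m : Multiset ℝ) :
    Multiset.sort (m.map f) (· ≤ ·) = (Multiset.sort m (· ≤ ·)).map f := by
  refine List.Perm.eq_of_pairwise' (r := (· ≤ ·)) (Multiset.pairwise_sort (s := _) (r := (· ≤ ·)))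
    (List.Pairwise.map f (fun a b h => hf h) (Multiset.pairwise_sort (s := m) (r := (· ≤ ·)))) ?_
  rw [← Multiset.coe_eq_coe, Multiset.sort_eq, ← Multiset.map_coe, Multiset.sort_eq]

private lemma qthSmallest_const_mul {D : Type*} [Fintype D] (c : ℝ) (hc : 0 ≤ c)
    (x : D → ℝ) (q : ℕ) (hq1 : 1 ≤ q) (hq2 : q ≤ Fintype.card D) :
    qthSmallest (fun d => c * x d) q = c * qthSmallest x q := by
  unfold qthSmallest
  have hmap : (Finset.univ.val.map fun d => c * x d)
      = (Finset.univ.val.map x).map (fun z => c * z) := by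
    rw [Multiset.map_map]; rfl
  rw [hmap, sort_map_mono (fun a b h => mul_le_mul_of_nonneg_left h hc)]
  have hlen : q - 1 < (Multiset.sort (Finset.univ.val.map x) (· ≤ ·)).length := by
    rw [Multiset.length_sort, Multiset.card_map]
    have h : Multiset.card (Finset.univ.val : Multiset D) = Fintype.card D := rfl
    omega
  rw [List.getD_eq_getElem _ _ (by simpa using hlen),
    List.getD_eq_getElem _ _ hlen, List.getElem_map]

theorem stmt14 (p l : ℕ) (hp : 1 ≤ p) (hl : 1 ≤ l)
    (D : Type) [Fintype D] (hD : Fintype.card D = l)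
    (q : ℕ) (hq1 : 1 ≤ q) (hq2 : q ≤ l)
    (lam : ℝ) (hlam : 0 < lam)
    (τ : Fin p → Type) (T : (j : Fin p) → Set (τ j)) (hTne : ∀ j, (T j).Nonempty)
    (s : (j : Fin p) → τ j → ℝ) (hs : ∀ j, ∀ t ∈ T j, 0 < s j t)
    (r : D → (j : Fin p) → τ j → ℝ)
    (hbdd : ∀ d j, BddAbove ((fun t => |r d j t| / s j t) '' T j))
    (ks : ℝ)
    (hks : ks = qthSmallest
      (fun d => ⨆ j : Fin p, sSup ((fun t => |r d j t| / s j t) '' T j)) q)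
    (klams : ℝ)
    (hklams : klams = qthSmallest
      (fun d => ⨆ j : Fin p, sSup ((fun t => |r d j t| / (lam * s j t)) '' T j)) q) :
    klams = ks / lam ∧
      ∀ y μ : (j : Fin p) → τ j → ℝ,
        ((∀ j : Fin p, ∀ t ∈ T j, |y j t - μ j t| ≤ klams * (lam * s j t)) ↔
          (∀ j : Fin p, ∀ t ∈ T j, |y j t - μ j t| ≤ ks * s j t)) := by
  have hlam' : lam ≠ 0 := ne_of_gt hlam
  have hinv : (0:ℝ) ≤ lam⁻¹ := le_of_lt (inv_pos.2 hlam)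
  have key : klams = lam⁻¹ * ks := by
    rw [hklams, hks]
    have hfun : (fun d => ⨆ j : Fin p, sSup ((fun t => |r d j t| / (lam * s j t)) '' T j))
        = fun d => lam⁻¹ * ⨆ j : Fin p, sSup ((fun t => |r d j t| / s j t) '' T j) := by
      funext d
      rw [Real.mul_iSup_of_nonneg hinv]
      congr 1
      funext j
      have himg : (fun t => |r d j t| / (lam * s j t)) '' T j
          = lam⁻¹ • ((fun t => |r d j t| / s j t) '' T j) := by
        rw [← Set.image_smul, Set.image_image]
        apply Set.image_congr
        intro t _
        simp only [smul_eq_mul]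
        field_simp
      rw [himg, Real.sSup_smul_of_nonneg hinv, smul_eq_mul]
    rw [hfun, qthSmallest_const_mul lam⁻¹ hinv _ q hq1 (by omega)]
  constructor
  · rw [key, inv_mul_eq_div]
  · intro y μ
    have : ∀ j t, klams * (lam * s j t) = ks * s j t := by
      intro j t; rw [key]; field_simp
    constructor
    · intro h j t ht; rw [← this j t]; exact h j t ht
    · intro h j t ht; rw [this j t]; exact h j t ht
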